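/- arXiv:1708.02751 — 2 statements merged into one kernel-verified Lean document; each statement's English description precedes it below -/
import Mathlib

section
/- For S > 0, α > 0 with α not an integer, and λ > 0, the Laplace transform of ψ(τ) = (S/(S+τ))^α is given by ψ̂(λ) = ∫₀^∞ e^{-λτ}(S/(S+τ))^α dτ = S^α λ^{α-1} e^{Sλ} Γ(1-α, Sλ), where Γ(b,z) = ∫_z^∞ t^{b-1} e^{-t} dt is the upper incomplete Gamma function. -/
open MeasureTheory Set Real

lemma my_integral_comp_add_right_Ioi (g : ℝ → ℝ) (a d : ℝ) :
    (∫ x in Set.Ioi a, g (x + d)) = ∫ x in Set.Ioi (a + d), g x := by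
  have hm : ∀ c : ℝ, MeasurableSet (Set.Ioi c) := fun c => measurableSet_Ioi
  rw [← integral_indicator (hm a), ← integral_indicator (hm (a + d)),
    ← integral_add_right_eq_self (Set.indicator (Set.Ioi (a + d)) g) d]
  congr 1
  ext x
  simp only [Set.indicator_apply, Set.mem_Ioi]
  by_cases h : a < x
  · rw [if_pos h, if_pos (by linarith)]
  · rw [if_neg h, if_neg (by intro hc; exact h (by linarith))]

/-- The upper incomplete Gamma function `Γ(b, z) = ∫_z^∞ t^{b-1} e^{-t} dt` (for `z > 0`). -/
noncomputable def upperGamma (b z : ℝ) : ℝ :=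
  ∫ t in Set.Ioi z, t ^ (b - 1) * Real.exp (-t)

/-- Laplace transform of the running probability: for `S > 0`, non-integer `α > 0`
and `λ > 0`, `∫₀^∞ e^{-λτ}(S/(S+τ))^α dτ = S^α λ^{α-1} e^{Sλ} Γ(1-α, Sλ)`. -/
theorem laplace_transform_running_probability (S α lam : ℝ)
    (hS : 0 < S) (hα : 0 < α) (hαni : ∀ n : ℤ, α ≠ n) (hlam : 0 < lam) :
    ∫ τ in Set.Ioi (0:ℝ), Real.exp (-lam * τ) * (S / (S + τ)) ^ α
      = S ^ α * lam ^ (α - 1) * Real.exp (S * lam) * upperGamma (1 - α) (S * lam) := by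
  have h1 : upperGamma (1 - α) (S * lam)
      = lam * ∫ τ in Set.Ioi (0:ℝ), (lam * (τ + S)) ^ (-α) * Real.exp (-(lam * (τ + S))) := by
    unfold upperGamma
    have he : (1 - α - 1 : ℝ) = -α := by ring
    rw [he]
    have h2 := integral_comp_mul_left_Ioi (fun t => t ^ (-α) * Real.exp (-t)) S hlam
    simp only [smul_eq_mul] at h2
    have h3 := my_integral_comp_add_right_Ioi
      (fun u => (lam * u) ^ (-α) * Real.exp (-(lam * u))) 0 S
    rw [zero_add] at h3
    rw [mul_comm S lam, h3, h2]
    field_simp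
  have key : ∀ τ : ℝ, τ ∈ Set.Ioi (0:ℝ) →
      Real.exp (-lam * τ) * (S / (S + τ)) ^ α
        = (S ^ α * lam ^ (α - 1) * Real.exp (S * lam) * lam) *
          ((lam * (τ + S)) ^ (-α) * Real.exp (-(lam * (τ + S)))) := by
    intro τ hτ
    have hτ0 : (0:ℝ) < τ := hτ
    have hτS : (0:ℝ) < τ + S := by linarith
    have e1 : (lam * (τ + S)) ^ (-α) = lam ^ (-α) * (τ + S) ^ (-α) :=
      Real.mul_rpow hlam.le hτS.le
    have e2 : Real.exp (S * lam) * Real.exp (-(lam * (τ + S))) = Real.exp (-lam * τ) := by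
      rw [← Real.exp_add]; congr 1; ring
    have e3 : lam ^ (α - 1) * lam * lam ^ (-α) = 1 := by
      rw [← Real.rpow_add_one hlam.ne', ← Real.rpow_add hlam]
      norm_num
    have e4 : (S / (S + τ)) ^ α = S ^ α * (τ + S) ^ (-α) := by
      rw [Real.div_rpow hS.le (by linarith : (0:ℝ) ≤ S + τ),
        Real.rpow_neg hτS.le, show S + τ = τ + S from by ring, div_eq_mul_inv]
    rw [e1, e4, ← e2]
    linear_combination
      (-(Real.exp (S * lam) * Real.exp (-(lam * (τ + S))) * S ^ α * (τ + S) ^ (-α))) * e3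
  rw [setIntegral_congr_fun measurableSet_Ioi key, h1]
  rw [show S ^ α * lam ^ (α - 1) * Real.exp (S * lam) *
      (lam * ∫ τ in Set.Ioi (0:ℝ), (lam * (τ + S)) ^ (-α) * Real.exp (-(lam * (τ + S))))
      = (S ^ α * lam ^ (α - 1) * Real.exp (S * lam) * lam) *
        ∫ τ in Set.Ioi (0:ℝ), (lam * (τ + S)) ^ (-α) * Real.exp (-(lam * (τ + S)))
      from by ring]
  rw [← integral_const_mul]
end

section
/- For 1 < α < 2 and S > 0, as λ → 0⁺ the Laplace transform φ̂(λ) of φ(τ) = αS^α/(S+τ)^{α+1} satisfies φ̂(λ) = 1 + Sλ/(1-α) + O((Sλ)^α); i.e. |φ̂(λ) - 1 - Sλ/(1-α)| ≤ C λ^α for small λ and some constant C. -/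
open MeasureTheory Set Real

lemma key_fact (S : ℝ) (hS : 0 < S) (s : ℝ) (hs : s < -1) :
    IntegrableOn (fun τ => (S + τ) ^ s) (Ioi (0:ℝ)) ∧
    (∫ τ in Ioi (0:ℝ), (S + τ) ^ s) = -S ^ (s+1) / (s+1) := by
  have h₁ : MeasurePreserving (· + S) (volume : Measure ℝ) volume :=
    measurePreserving_add_right volume S
  have h₂ : MeasurableEmbedding (· + S : ℝ → ℝ) :=
    (MeasurableEquiv.addRight S).measurableEmbedding
  have h4 : ((· + S) : ℝ → ℝ) ⁻¹' Ioi S = Ioi 0 := by ext x; simp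
  constructor
  · have := (h₁.integrableOn_comp_preimage h₂ (f := fun u : ℝ => u ^ s) (s := Ioi S)).mpr
      (integrableOn_Ioi_rpow_of_lt hs hS)
    rw [h4] at this
    refine this.congr_fun (fun x _ => by simp [add_comm]) measurableSet_Ioi
  · have h3 := h₁.setIntegral_preimage_emb h₂ (fun u : ℝ => u ^ s) (Ioi S)
    rw [h4] at h3
    rw [show (fun τ : ℝ => (S + τ) ^ s) = fun τ : ℝ => (τ + S) ^ s from funext fun τ => by
      rw [add_comm]]
    calc (∫ τ in Ioi (0:ℝ), (τ + S) ^ s) = ∫ u in Ioi S, u ^ s := h3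
    _ = -S ^ (s+1) / (s+1) := integral_Ioi_rpow_of_lt hs hS

lemma hfeq (S α : ℝ) (hS : 0 < S) : ∀ τ : ℝ, 0 ≤ τ →
    α * S ^ α / (S + τ) ^ (α+1) = (α * S ^ α) * (S + τ) ^ (-(α+1)) := by
  intro τ hτ
  have h : (0:ℝ) < S + τ := by linarith
  rw [rpow_neg h.le, div_eq_mul_inv]

lemma hfun_eq (S α : ℝ) (hS : 0 < S) :
    EqOn (fun τ : ℝ => α * S ^ α / (S + τ) ^ (α+1))
      (fun τ : ℝ => (α * S ^ α) * (S + τ) ^ (-(α+1))) (Ioi 0) :=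
  fun x hx => hfeq S α hS x (le_of_lt hx)

lemma hf_int (S α : ℝ) (hS : 0 < S) (hα1 : 1 < α) :
    IntegrableOn (fun τ => α * S ^ α / (S + τ) ^ (α+1)) (Ioi (0:ℝ)) := by
  have h : IntegrableOn (fun τ : ℝ => (α * S ^ α) * (S + τ) ^ (-(α+1))) (Ioi (0:ℝ)) :=
    (key_fact S hS (-(α+1)) (by linarith)).1.const_mul (α * S ^ α)
  exact h.congr_fun (fun x hx => (hfeq S α hS x (le_of_lt hx)).symm) measurableSet_Ioi

lemma hf1 (S α : ℝ) (hS : 0 < S) (hα1 : 1 < α) :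
    (∫ τ in Ioi (0:ℝ), α * S ^ α / (S + τ) ^ (α+1)) = 1 := by
  rw [setIntegral_congr_fun measurableSet_Ioi (hfun_eq S α hS)]
  rw [integral_const_mul, (key_fact S hS (-(α+1)) (by linarith)).2]
  have h1 : -(α+1) + 1 = -α := by ring
  rw [h1, rpow_neg hS.le]
  have hSα : S ^ α ≠ 0 := ne_of_gt (rpow_pos_of_pos hS α)
  have hα0 : α ≠ 0 := by linarith
  field_simp

lemma tau_eq (S α τ : ℝ) (hpos : 0 < S + τ) :
    τ * (S + τ) ^ (-(α+1)) = (S + τ) ^ (-α) - S * (S + τ) ^ (-(α+1)) := by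
  have h : (S + τ) ^ (-α) = (S + τ) * (S + τ) ^ (-(α+1)) := by
    have := Real.rpow_add hpos 1 (-(α+1))
    rw [show (1 : ℝ) + -(α+1) = -α by ring] at this
    rw [this, rpow_one]
  rw [h]; ring

lemma htf_int (S α : ℝ) (hS : 0 < S) (hα1 : 1 < α) :
    IntegrableOn (fun τ => τ * (α * S ^ α / (S + τ) ^ (α+1))) (Ioi (0:ℝ)) := by
  have h1 := (key_fact S hS (-α) (by linarith)).1
  have h2 := (key_fact S hS (-(α+1)) (by linarith)).1
  have h : IntegrableOn (fun τ : ℝ => (α * S ^ α) * ((S + τ) ^ (-α) - S * (S + τ) ^ (-(α+1))))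
      (Ioi (0:ℝ)) := ((h1.sub (h2.const_mul S)).const_mul (α * S ^ α))
  refine h.congr_fun (fun x hx => ?_) measurableSet_Ioi
  have hpos : (0:ℝ) < S + x := by have := mem_Ioi.mp hx; linarith
  simp only
  rw [hfeq S α hS x (le_of_lt hx), ← tau_eq S α x hpos]
  ring

lemma htf (S α : ℝ) (hS : 0 < S) (hα1 : 1 < α) :
    (∫ τ in Ioi (0:ℝ), τ * (α * S ^ α / (S + τ) ^ (α+1))) = S / (α - 1) := by
  have h1 := key_fact S hS (-α) (by linarith)
  have h2 := key_fact S hS (-(α+1)) (by linarith)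
  have heq : EqOn (fun τ : ℝ => τ * (α * S ^ α / (S + τ) ^ (α+1)))
      (fun τ : ℝ => (α * S ^ α) * ((S + τ) ^ (-α) - S * (S + τ) ^ (-(α+1)))) (Ioi 0) := by
    intro x hx
    have hpos : (0:ℝ) < S + x := by have := mem_Ioi.mp hx; linarith
    simp only
    rw [hfeq S α hS x (le_of_lt hx), ← tau_eq S α x hpos]
    ring
  rw [setIntegral_congr_fun measurableSet_Ioi heq, integral_const_mul,
    integral_sub h1.1 (h2.1.const_mul S), integral_const_mul, h1.2, h2.2]
  have hα0 : α ≠ 0 := by linarith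
  have hα1' : α - 1 ≠ 0 := by intro h; linarith [(sub_eq_zero.mp h)]
  have v1 : -S ^ (-α + 1) / (-α + 1) = S ^ (-α+1) / (α-1) := by
    rw [div_eq_div_iff (by intro h; apply hα1'; linarith) hα1']
    ring
  have v2 : -S ^ (-(α+1) + 1) / (-(α+1) + 1) = S ^ (-(α+1)+1) / α := by
    rw [div_eq_div_iff (by intro h; apply hα0; linarith) hα0]
    ring
  rw [v1, v2]
  have e1 : S ^ α * S ^ (-α+1) = S := by
    rw [← Real.rpow_add hS]
    norm_num
  have e2 : S ^ α * S ^ (-(α+1)+1) = 1 := by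
    rw [← Real.rpow_add hS]
    norm_num
  calc α * S ^ α * (S ^ (-α+1)/(α-1) - S * (S ^ (-(α+1)+1)/α))
      = (S ^ α * S ^ (-α+1)) * α/(α-1) - (S ^ α * S ^ (-(α+1)+1)) * S := by
        field_simp
    _ = S * α/(α-1) - S := by rw [e1, e2]; ring
    _ = S/(α-1) := by field_simp; ring

/-- Small-`λ` expansion of the Laplace transform `φ̂` of `φ(τ) = α S^α/(S+τ)^{α+1}`,
`1 < α < 2`: `φ̂(λ) = 1 + Sλ/(1-α) + O(λ^α)` as `λ → 0⁺`. -/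
theorem laplace_phi_expansion (S α : ℝ) (hS : 0 < S) (hα1 : 1 < α) (hα2 : α < 2) :
    ∃ C > (0:ℝ), ∃ δ > (0:ℝ), ∀ lam ∈ Set.Ioo (0:ℝ) δ,
      |(∫ τ in Set.Ioi (0:ℝ), Real.exp (-lam * τ) * (α * S ^ α / (S + τ) ^ (α + 1)))
          - 1 - S * lam / (1 - α)|
        ≤ C * lam ^ α := by
  have h2α : (0:ℝ) < 2 - α := by linarith
  have hαm1 : (0:ℝ) < α - 1 := by linarith
  have hα0 : (0:ℝ) < α := by linarith
  have hSα : 0 < S ^ α := rpow_pos_of_pos hS α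
  set c1 : ℝ := α * S ^ α * (2 ^ (2-α) / (2-α)) with hc1
  set c2 : ℝ := α * S ^ α * (1 / (α-1)) with hc2
  have hc1pos : 0 < c1 :=
    mul_pos (mul_pos hα0 hSα) (div_pos (rpow_pos_of_pos two_pos _) h2α)
  have hc2pos : 0 < c2 := mul_pos (mul_pos hα0 hSα) (div_pos one_pos hαm1)
  refine ⟨c1 + c2, by linarith, 1/S, by positivity, ?_⟩
  rintro lam ⟨hlam0, hlamS⟩
  have hfint := hf_int S α hS hα1
  have hf1' := hf1 S α hS hα1
  have htfint := htf_int S α hS hα1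
  have htf' := htf S α hS hα1
  have hfnn : ∀ τ : ℝ, 0 ≤ τ → 0 ≤ α * S ^ α / (S + τ) ^ (α+1) := by
    intro τ hτ
    have h : (0:ℝ) < S + τ := by linarith
    positivity
  -- integrability of exp * f
  have hexpint : IntegrableOn
      (fun τ => Real.exp (-lam * τ) * (α * S ^ α / (S + τ) ^ (α+1))) (Ioi (0:ℝ)) := by
    refine Integrable.mono hfint ?_ ?_
    · exact ((Real.continuous_exp.comp
        (continuous_const.mul continuous_id)).aestronglyMeasurable).mul
        hfint.aestronglyMeasurable
    · filter_upwards [ae_restrict_mem measurableSet_Ioi] with τ hτ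
      have hτ0 : (0:ℝ) < τ := hτ
      rw [Real.norm_eq_abs, Real.norm_eq_abs, abs_mul]
      have h1 : |Real.exp (-lam*τ)| ≤ 1 := by
        rw [abs_of_pos (Real.exp_pos _)]
        have : Real.exp (-lam*τ) ≤ Real.exp 0 := Real.exp_le_exp.mpr (by nlinarith)
        simpa using this
      calc |Real.exp (-lam*τ)| * |α * S ^ α / (S + τ) ^ (α+1)|
          ≤ 1 * |α * S ^ α / (S + τ) ^ (α+1)| :=
            mul_le_mul_of_nonneg_right h1 (abs_nonneg _)
        _ = |α * S ^ α / (S + τ) ^ (α+1)| := one_mul _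
  -- integrability of g * f
  have hgint : IntegrableOn
      (fun τ => (Real.exp (-lam*τ) - 1 + lam*τ) * (α * S ^ α / (S + τ) ^ (α+1)))
      (Ioi (0:ℝ)) := by
    have h : IntegrableOn
        (fun τ => (Real.exp (-lam*τ) * (α * S ^ α / (S + τ) ^ (α+1))
          - α * S ^ α / (S + τ) ^ (α+1))
          + lam * (τ * (α * S ^ α / (S + τ) ^ (α+1)))) (Ioi (0:ℝ)) :=
      (hexpint.sub hfint).add (htfint.const_mul lam)
    exact h.congr_fun (fun x _ => by ring) measurableSet_Ioi
  -- main identity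
  have hid : (∫ τ in Ioi (0:ℝ), Real.exp (-lam*τ) * (α * S ^ α / (S + τ) ^ (α+1)))
      - 1 - S * lam/(1-α)
      = ∫ τ in Ioi (0:ℝ), (Real.exp (-lam*τ) - 1 + lam*τ)
          * (α * S ^ α / (S + τ) ^ (α+1)) := by
    have he : (∫ τ in Ioi (0:ℝ), (Real.exp (-lam*τ) - 1 + lam*τ)
          * (α * S ^ α / (S + τ) ^ (α+1)))
        = ∫ τ in Ioi (0:ℝ), ((Real.exp (-lam*τ) * (α * S ^ α / (S + τ) ^ (α+1))
          - α * S ^ α / (S + τ) ^ (α+1))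
          + lam * (τ * (α * S ^ α / (S + τ) ^ (α+1)))) :=
      setIntegral_congr_fun measurableSet_Ioi (fun x _ => by ring)
    have hsub : IntegrableOn (fun τ => Real.exp (-lam*τ) * (α * S ^ α / (S + τ) ^ (α+1))
        - α * S ^ α / (S + τ) ^ (α+1)) (Ioi (0:ℝ)) := hexpint.sub hfint
    have hcm : IntegrableOn (fun τ => lam * (τ * (α * S ^ α / (S + τ) ^ (α+1))))
        (Ioi (0:ℝ)) := htfint.const_mul lam
    rw [he, integral_add hsub hcm, integral_sub hexpint hfint, integral_const_mul, hf1', htf']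
    have h1α : (1-α) ≠ 0 := by intro h; linarith
    generalize (∫ τ in Ioi (0:ℝ), Real.exp (-lam*τ) * (α * S ^ α / (S + τ) ^ (α+1))) = I
    rw [div_eq_mul_inv, div_eq_mul_inv, show (1-α)⁻¹ = -(α-1)⁻¹ by rw [← inv_neg, neg_sub]]
    ring
  rw [hid]
  -- split point
  set T : ℝ := lam⁻¹ with hTdef
  have hT : 0 < T := by positivity
  have hST : S ≤ T := by
    rw [hTdef, ← one_div lam, le_div_iff₀ hlam0]
    have h1 : lam * S < 1 := (lt_div_iff₀ hS).mp hlamS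
    nlinarith
  have hlamT : lam * T = 1 := mul_inv_cancel₀ (ne_of_gt hlam0)
  -- |∫| ≤ ∫ abs
  have habs : |∫ τ in Ioi (0:ℝ), (Real.exp (-lam*τ) - 1 + lam*τ)
        * (α * S ^ α / (S + τ) ^ (α+1))|
      ≤ ∫ τ in Ioi (0:ℝ), |(Real.exp (-lam*τ) - 1 + lam*τ)
        * (α * S ^ α / (S + τ) ^ (α+1))| := by
    simpa only [Real.norm_eq_abs] using norm_integral_le_integral_norm
      (μ := volume.restrict (Ioi (0:ℝ)))
      (fun τ => (Real.exp (-lam*τ) - 1 + lam*τ) * (α * S ^ α / (S + τ) ^ (α+1)))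
  have hintA : IntegrableOn (fun τ => |(Real.exp (-lam*τ) - 1 + lam*τ)
      * (α * S ^ α / (S + τ) ^ (α+1))|) (Ioc (0:ℝ) T) := by
    have h : IntegrableOn (fun τ => |(Real.exp (-lam*τ) - 1 + lam*τ)
      * (α * S ^ α / (S + τ) ^ (α+1))|) (Ioi (0:ℝ)) := hgint.abs
    exact h.mono_set Ioc_subset_Ioi_self
  have hintB : IntegrableOn (fun τ => |(Real.exp (-lam*τ) - 1 + lam*τ)
      * (α * S ^ α / (S + τ) ^ (α+1))|) (Ioi T) := by
    have h : IntegrableOn (fun τ => |(Real.exp (-lam*τ) - 1 + lam*τ)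
      * (α * S ^ α / (S + τ) ^ (α+1))|) (Ioi (0:ℝ)) := hgint.abs
    exact h.mono_set (Ioi_subset_Ioi hT.le)
  have hsplit : (∫ τ in Ioi (0:ℝ), |(Real.exp (-lam*τ) - 1 + lam*τ)
        * (α * S ^ α / (S + τ) ^ (α+1))|)
      = (∫ τ in Ioc (0:ℝ) T, |(Real.exp (-lam*τ) - 1 + lam*τ)
        * (α * S ^ α / (S + τ) ^ (α+1))|)
      + ∫ τ in Ioi T, |(Real.exp (-lam*τ) - 1 + lam*τ)
        * (α * S ^ α / (S + τ) ^ (α+1))| := by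
    rw [show Ioi (0:ℝ) = Ioc 0 T ∪ Ioi T from (Ioc_union_Ioi_eq_Ioi hT.le).symm,
      setIntegral_union (Ioc_disjoint_Ioi le_rfl) measurableSet_Ioi hintA hintB]
  -- Piece A
  have hpow2 : ∀ τ : ℝ, 0 < S + τ → (S+τ)^(2:ℕ) * (S+τ)^(-(α+1)) = (S+τ)^(1-α) := by
    intro τ h
    rw [← Real.rpow_natCast (S+τ) 2, ← Real.rpow_add h]
    congr 1
    push_cast
    ring
  have hleA : ∀ τ ∈ Ioc (0:ℝ) T, |(Real.exp (-lam*τ) - 1 + lam*τ)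
      * (α * S ^ α / (S + τ) ^ (α+1))| ≤ lam^2 * (α*S^α) * (S+τ)^(1-α) := by
    rintro τ ⟨hτ0, hτT⟩
    have hpos : (0:ℝ) < S + τ := by linarith
    have hfτ := hfnn τ hτ0.le
    rw [abs_mul, abs_of_nonneg hfτ]
    have hx : |(-(lam*τ))| ≤ 1 := by
      rw [abs_neg, abs_of_nonneg (by positivity)]
      calc lam*τ ≤ lam*T := by gcongr
        _ = 1 := hlamT
    have hg : |Real.exp (-lam*τ) - 1 + lam*τ| ≤ (lam*τ)^2 := by
      have h := Real.abs_exp_sub_one_sub_id_le hx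
      rw [neg_mul]
      simpa [sub_neg_eq_add, neg_sq] using h
    calc |Real.exp (-lam*τ) - 1 + lam*τ| * (α * S ^ α / (S + τ) ^ (α+1))
        ≤ (lam*τ)^2 * (α * S ^ α / (S + τ) ^ (α+1)) :=
          mul_le_mul_of_nonneg_right hg hfτ
      _ = lam^2*(α*S^α) * (τ^(2:ℕ) * (S+τ)^(-(α+1))) := by
          rw [hfeq S α hS τ hτ0.le]; ring
      _ ≤ lam^2*(α*S^α) * ((S+τ)^(2:ℕ) * (S+τ)^(-(α+1))) := by
          gcongr
          linarith
      _ = lam^2*(α*S^α)*(S+τ)^(1-α) := by rw [hpow2 τ hpos]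
  have hrhsA : IntegrableOn (fun τ => lam^2*(α*S^α) * (S+τ)^(1-α)) (Ioc (0:ℝ) T) := by
    apply Integrable.const_mul
    have hc : ContinuousOn (fun τ : ℝ => (S+τ)^(1-α)) (Icc (0:ℝ) T) := by
      apply ContinuousOn.rpow_const
      · exact (continuous_const.add continuous_id).continuousOn
      · intro x hx
        refine Or.inl (ne_of_gt ?_)
        have h1 := hx.1
        show (0:ℝ) < S + x
        linarith
    exact (hc.integrableOn_Icc).mono_set Ioc_subset_Icc_self
  have hvalA : (∫ τ in Ioc (0:ℝ) T, (S+τ)^(1-α)) = ((T+S)^(2-α) - S^(2-α))/(2-α) := by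
    rw [← intervalIntegral.integral_of_le hT.le]
    calc (∫ x in (0:ℝ)..T, (S+x)^(1-α))
        = ∫ x in (0:ℝ)..T, (x + S)^(1-α) := by
          apply intervalIntegral.integral_congr
          intro x hx
          show (S+x)^(1-α) = (x+S)^(1-α)
          rw [add_comm]
      _ = ∫ u in (0+S)..(T+S), u^(1-α) :=
          intervalIntegral.integral_comp_add_right (f := fun u : ℝ => u^(1-α)) S
      _ = ((T+S)^((1-α)+1) - (0+S)^((1-α)+1))/((1-α)+1) := by
          apply integral_rpow
          exact Or.inl (by linarith)
      _ = ((T+S)^(2-α) - S^(2-α))/(2-α) := by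
          rw [show (1-α)+1 = 2-α by ring]
          norm_num
  have hTpow : (2*T)^(2-α) = 2^(2-α) * lam^(α-2) := by
    rw [mul_rpow (by norm_num) hT.le, hTdef, Real.inv_rpow hlam0.le,
      ← Real.rpow_neg hlam0.le, show -(2-α) = α-2 by ring]
  have hlampow : lam^(2:ℕ) * lam^(α-2) = lam^α := by
    rw [← Real.rpow_natCast lam 2, ← Real.rpow_add hlam0]
    congr 1
    push_cast
    ring
  have hA : (∫ τ in Ioc (0:ℝ) T, |(Real.exp (-lam*τ) - 1 + lam*τ)
      * (α * S ^ α / (S + τ) ^ (α+1))|) ≤ c1 * lam^α := by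
    calc (∫ τ in Ioc (0:ℝ) T, |(Real.exp (-lam*τ) - 1 + lam*τ)
          * (α * S ^ α / (S + τ) ^ (α+1))|)
        ≤ ∫ τ in Ioc (0:ℝ) T, lam^2*(α*S^α)*(S+τ)^(1-α) :=
          setIntegral_mono_on hintA hrhsA measurableSet_Ioc hleA
      _ = lam^2*(α*S^α) * (((T+S)^(2-α) - S^(2-α))/(2-α)) := by
          rw [integral_const_mul, hvalA]
      _ ≤ lam^2*(α*S^α) * ((2*T)^(2-α)/(2-α)) := by
          have h1 : (T+S)^(2-α) ≤ (2*T)^(2-α) :=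
            rpow_le_rpow (by linarith) (by linarith) h2α.le
          have h2 : 0 ≤ S^(2-α) := rpow_nonneg hS.le _
          have h3 : (0:ℝ) ≤ lam^2*(α*S^α) := by positivity
          gcongr
          linarith
      _ = c1 * lam^α := by
          rw [hTpow]
          calc lam^2*(α*S^α) * ((2^(2-α)*lam^(α-2))/(2-α))
              = (α*S^α*(2^(2-α)/(2-α))) * (lam^(2:ℕ) * lam^(α-2)) := by
                field_simp
            _ = c1 * lam^α := by rw [hlampow, hc1]
  -- Piece B
  have hleB : ∀ τ ∈ Ioi T, |(Real.exp (-lam*τ) - 1 + lam*τ)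
      * (α * S ^ α / (S + τ) ^ (α+1))| ≤ (lam*(α*S^α)) * τ^(-α) := by
    intro τ hτ
    have hτT : T < τ := hτ
    have hτ0 : 0 < τ := lt_trans hT hτT
    have hpos : (0:ℝ) < S + τ := by linarith
    have hfτ := hfnn τ hτ0.le
    rw [abs_mul, abs_of_nonneg hfτ]
    have hg0 : 0 ≤ Real.exp (-lam*τ) - 1 + lam*τ := by
      have h := Real.add_one_le_exp (-(lam*τ))
      rw [neg_mul]
      linarith
    have hg1 : Real.exp (-lam*τ) - 1 + lam*τ ≤ lam*τ := by
      have h : Real.exp (-lam*τ) ≤ Real.exp 0 := Real.exp_le_exp.mpr (by nlinarith)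
      rw [Real.exp_zero] at h
      linarith
    rw [abs_of_nonneg hg0]
    have hstep : (S+τ) * (S+τ)^(-(α+1)) = (S+τ)^(-α) := by
      have h := Real.rpow_add hpos 1 (-(α+1))
      rw [show (1:ℝ) + -(α+1) = -α by ring] at h
      rw [h, rpow_one]
    calc (Real.exp (-lam*τ) - 1 + lam*τ) * (α * S ^ α / (S + τ) ^ (α+1))
        ≤ (lam*τ) * (α * S ^ α / (S + τ) ^ (α+1)) :=
          mul_le_mul_of_nonneg_right hg1 hfτ
      _ = lam*(α*S^α) * (τ * (S+τ)^(-(α+1))) := by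
          rw [hfeq S α hS τ hτ0.le]; ring
      _ ≤ lam*(α*S^α) * ((S+τ) * (S+τ)^(-(α+1))) := by
          gcongr
          linarith
      _ = lam*(α*S^α) * (S+τ)^(-α) := by rw [hstep]
      _ ≤ lam*(α*S^α) * τ^(-α) := by
          apply mul_le_mul_of_nonneg_left
            (rpow_le_rpow_of_nonpos hτ0 (by linarith) (by linarith)) (by positivity)
  have hrhsB : IntegrableOn (fun τ => (lam*(α*S^α)) * τ^(-α)) (Ioi T) := by
    apply Integrable.const_mul
    exact integrableOn_Ioi_rpow_of_lt (by linarith) hT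
  have hvalB : (∫ τ in Ioi T, τ^(-α)) = T^(1-α)/(α-1) := by
    rw [integral_Ioi_rpow_of_lt (by linarith) hT, show -α+1 = 1-α by ring]
    rw [div_eq_div_iff (by intro h; linarith) (by intro h; linarith)]
    ring
  have hB : (∫ τ in Ioi T, |(Real.exp (-lam*τ) - 1 + lam*τ)
      * (α * S ^ α / (S + τ) ^ (α+1))|) ≤ c2 * lam^α := by
    calc (∫ τ in Ioi T, |(Real.exp (-lam*τ) - 1 + lam*τ)
          * (α * S ^ α / (S + τ) ^ (α+1))|)
        ≤ ∫ τ in Ioi T, (lam*(α*S^α)) * τ^(-α) :=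
          setIntegral_mono_on hintB hrhsB measurableSet_Ioi hleB
      _ = lam*(α*S^α) * (T^(1-α)/(α-1)) := by rw [integral_const_mul, hvalB]
      _ = c2 * lam^α := by
          have hTp : T^(1-α) = lam^(α-1) := by
            rw [hTdef, Real.inv_rpow hlam0.le, ← Real.rpow_neg hlam0.le,
              show -(1-α) = α-1 by ring]
          have hl : lam * lam^(α-1) = lam^α := by
            nth_rewrite 1 [← Real.rpow_one lam]
            rw [← Real.rpow_add hlam0]
            congr 1
            ring
          rw [hTp, hc2]
          calc lam*(α*S^α) * (lam^(α-1)/(α-1))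
              = (α*S^α*(1/(α-1))) * (lam * lam^(α-1)) := by ring
            _ = α*S^α*(1/(α-1)) * lam^α := by rw [hl]
  calc |∫ τ in Ioi (0:ℝ), (Real.exp (-lam*τ) - 1 + lam*τ)
        * (α * S ^ α / (S + τ) ^ (α+1))|
      ≤ ∫ τ in Ioi (0:ℝ), |(Real.exp (-lam*τ) - 1 + lam*τ)
        * (α * S ^ α / (S + τ) ^ (α+1))| := habs
    _ = (∫ τ in Ioc (0:ℝ) T, |(Real.exp (-lam*τ) - 1 + lam*τ)
        * (α * S ^ α / (S + τ) ^ (α+1))|)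
      + ∫ τ in Ioi T, |(Real.exp (-lam*τ) - 1 + lam*τ)
        * (α * S ^ α / (S + τ) ^ (α+1))| := hsplit
    _ ≤ c1 * lam^α + c2 * lam^α := add_le_add hA hB
    _ = (c1 + c2) * lam^α := by ring
end
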